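/- Let M be a monoid and A a finite set. Then every bijective cellular automaton τ : A^M → A^M is reversible: its inverse map τ⁻¹ is also a cellular automaton. -/

import Mathlib

/-- The prodiscrete uniform structure on `M → A` (product of discrete uniformities). -/
def prodiscrete (M A : Type*) : UniformSpace (M → A) :=
  @Pi.uniformSpace M (fun _ => A) (fun _ => ⊥)

theorem bijective_cellular_automaton_reversible
    {M A : Type*} [Monoid M] [Finite A] (τ : (M → A) → (M → A))
    (hequiv : ∀ (m : M) (x : M → A), τ (fun u => x (u * m)) = fun u => τ x (u * m))
    (huc : @UniformContinuous _ _ (prodiscrete M A) (prodiscrete M A) τ)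
    (hbij : Function.Bijective τ) :
    ∃ σ : (M → A) → (M → A),
      (∀ x, σ (τ x) = x) ∧ (∀ x, τ (σ x) = x) ∧
      (∀ (m : M) (x : M → A), σ (fun u => x (u * m)) = fun u => σ x (u * m)) ∧
      @UniformContinuous _ _ (prodiscrete M A) (prodiscrete M A) σ := by
  letI uA : UniformSpace A := ⊥
  letI uMA : UniformSpace (M → A) := prodiscrete M A
  have hU : uMA = @Pi.uniformSpace M (fun _ => A) (fun _ => uA) := rfl
  haveI : DiscreteTopology A := ⟨rfl⟩
  haveI : CompactSpace A := Finite.compactSpace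
  haveI : CompactSpace (M → A) := Pi.compactSpace
  haveI : T2Space (M → A) := inferInstance
  let e : (M → A) ≃ (M → A) := Equiv.ofBijective τ hbij
  have hcont : Continuous τ := huc.continuous
  let h : (M → A) ≃ₜ (M → A) := Continuous.homeoOfEquivCompactToT2 (f := e) hcont
  refine ⟨e.symm, fun x => e.symm_apply_apply x, fun x => e.apply_symm_apply x, ?_, ?_⟩
  · intro m x
    apply hbij.injective
    have h1 : τ (e.symm fun u => x (u * m)) = fun u => x (u * m) :=
      e.apply_symm_apply _
    have h2 : τ (fun u => e.symm x (u * m)) = fun u => x (u * m) := by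
      rw [hequiv m (e.symm x)]
      have : τ (e.symm x) = x := e.apply_symm_apply x
      rw [this]
    rw [h1, h2]
  · have hc : @CompactSpace (M → A) (prodiscrete M A).toTopologicalSpace := Pi.compactSpace
    exact CompactSpace.uniformContinuous_of_continuous h.symm.continuous
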